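/- Let δ be a nonzero element of the ring of integers O_F of a number field F, and let f ∈ (1/δ)·O_F[x] be a monic polynomial which factors as f = g·h in F[x] with g, h monic. Then g, h ∈ (1/δ)·O_F[x]. -/

import Mathlib

open IsDedekindDomain IsDedekindDomain.HeightOneSpectrum Polynomial Finset
open scoped nonZeroDivisors

section Aux

variable {R : Type*} [CommRing R] [IsDedekindDomain R] {K : Type*} [Field K]
  [Algebra R K] [IsFractionRing R K]

/-- An element of the fraction field of a Dedekind domain all of whose adic valuations are
at most one lies in the image of the ring. -/
theorem aux_mem_range_of_forall_valuation_le_one (x : K)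
    (hx : ∀ v : HeightOneSpectrum R, v.valuation K x ≤ 1) :
    x ∈ (algebraMap R K).range := by
  by_cases hx0 : x = 0
  · exact ⟨0, by simp [hx0]⟩
  have hI0 : FractionalIdeal.spanSingleton R⁰ x ≠ 0 := by
    rw [ne_eq, FractionalIdeal.spanSingleton_eq_zero_iff]
    exact hx0
  obtain ⟨⟨n, d⟩, hnd⟩ := IsLocalization.mk'_surjective R⁰ x
  dsimp only at hnd
  have hn0 : n ≠ 0 := by
    rintro rfl
    apply hx0
    rw [← hnd, IsFractionRing.mk'_eq_div, map_zero, zero_div]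
  have hrep : FractionalIdeal.spanSingleton R⁰ x =
      FractionalIdeal.spanSingleton R⁰ ((algebraMap R K) (d : R))⁻¹ *
        ↑(Ideal.span {n} : Ideal R) := by
    rw [FractionalIdeal.coeIdeal_span_singleton,
      FractionalIdeal.spanSingleton_mul_spanSingleton, ← hnd,
      IsFractionRing.mk'_eq_div, div_eq_mul_inv, mul_comm]
  have hcount : ∀ v : HeightOneSpectrum R,
      0 ≤ FractionalIdeal.count K v (FractionalIdeal.spanSingleton R⁰ x) := by
    intro v
    rw [FractionalIdeal.count_well_defined K v hI0 hrep, sub_nonneg, Nat.cast_le]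
    have hv := hx v
    rw [← hnd, valuation_of_mk'] at hv
    have hd0' : (d : R) ≠ 0 := nonZeroDivisors.coe_ne_zero d
    have hd0 : v.intValuation (d : R) ≠ 0 := v.intValuation_ne_zero' d
    have hnd' : v.intValuation n ≤ v.intValuation (d : R) := by
      have := mul_le_mul_left hv (v.intValuation (d : R))
      rwa [div_mul_cancel₀ _ hd0, one_mul] at this
    rw [intValuation_apply, intValuation_apply, v.intValuationDef_if_neg hn0,
      v.intValuationDef_if_neg hd0', WithZero.exp_le_exp,
      neg_le_neg_iff, Int.ofNat_le] at hnd'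
    exact hnd'
  have hfact := FractionalIdeal.finprod_heightOneSpectrum_factorization' K hI0
  have hle : FractionalIdeal.spanSingleton R⁰ x ≤ 1 := by
    rw [← hfact]
    refine finprod_induction (fun J : FractionalIdeal R⁰ K => J ≤ 1) le_rfl
      (fun a b ha hb => ?_) (fun v => ?_)
    · show a * b ≤ 1
      rw [FractionalIdeal.mul_le]
      intro i hi j hj
      obtain ⟨i', rfl⟩ := (FractionalIdeal.mem_one_iff _).mp (ha hi)
      obtain ⟨j', rfl⟩ := (FractionalIdeal.mem_one_iff _).mp (hb hj)
      exact (FractionalIdeal.mem_one_iff _).mpr ⟨i' * j', map_mul _ _ _⟩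
    · rw [← Int.toNat_of_nonneg (hcount v), zpow_natCast, ← FractionalIdeal.coeIdeal_pow]
      exact FractionalIdeal.coeIdeal_le_one
  have hmem : x ∈ (1 : FractionalIdeal R⁰ K) :=
    hle (FractionalIdeal.mem_spanSingleton_self _ _)
  exact (FractionalIdeal.mem_one_iff _).mp hmem

/-- Valuation-theoretic Gauss bound: each coefficient of a monic factor of `g * h` has
valuation at most the sup of the valuations of the coefficients of the product. -/
theorem aux_val_coeff_le {K : Type*} [Field K] {Γ : Type*} [LinearOrderedCommGroupWithZero Γ]
    (v : Valuation K Γ) {g h : K[X]} (hg : g.Monic) (hh : h.Monic) (k : ℕ) :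
    v (g.coeff k) ≤
      (Finset.range ((g * h).natDegree + 1)).sup'
        ⟨0, Finset.mem_range.mpr (Nat.succ_pos _)⟩ (fun j => v ((g * h).coeff j)) := by
  have hne1 : (Finset.range (g.natDegree + 1)).Nonempty :=
    ⟨0, Finset.mem_range.mpr (Nat.succ_pos _)⟩
  have hne2 : (Finset.range (h.natDegree + 1)).Nonempty :=
    ⟨0, Finset.mem_range.mpr (Nat.succ_pos _)⟩
  set A := (Finset.range (g.natDegree + 1)).sup' hne1 (fun a => v (g.coeff a)) with hA
  set B := (Finset.range (h.natDegree + 1)).sup' hne2 (fun b => v (h.coeff b)) with hB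
  have hA1 : 1 ≤ A := by
    have := Finset.le_sup' (fun a => v (g.coeff a))
      (Finset.mem_range.mpr (Nat.lt_succ_self g.natDegree))
    rw [hg.coeff_natDegree, v.map_one] at this
    exact this
  have hB1 : 1 ≤ B := by
    have := Finset.le_sup' (fun b => v (h.coeff b))
      (Finset.mem_range.mpr (Nat.lt_succ_self h.natDegree))
    rw [hh.coeff_natDegree, v.map_one] at this
    exact this
  have hA0 : A ≠ 0 := fun hc => by rw [hc] at hA1; simp at hA1
  have hB0 : B ≠ 0 := fun hc => by rw [hc] at hB1; simp at hB1
  have hgA : ∀ a, v (g.coeff a) ≤ A := by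
    intro a
    by_cases ha : a ≤ g.natDegree
    · rw [hA]
      exact Finset.le_sup' (fun a => v (g.coeff a)) (Finset.mem_range.mpr (by omega))
    · rw [coeff_eq_zero_of_natDegree_lt (by omega), v.map_zero]
      exact zero_le'
  have hhB : ∀ b, v (h.coeff b) ≤ B := by
    intro b
    by_cases hb : b ≤ h.natDegree
    · rw [hB]
      exact Finset.le_sup' (fun b => v (h.coeff b)) (Finset.mem_range.mpr (by omega))
    · rw [coeff_eq_zero_of_natDegree_lt (by omega), v.map_zero]
      exact zero_le'
  -- largest indices attaining the sups
  set S := (Finset.range (g.natDegree + 1)).filter (fun a => v (g.coeff a) = A) with hS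
  have hSne : S.Nonempty := by
    obtain ⟨a, ha, hEq⟩ := Finset.exists_mem_eq_sup' hne1 (fun a => v (g.coeff a))
    exact ⟨a, Finset.mem_filter.mpr ⟨ha, hEq.symm⟩⟩
  set T := (Finset.range (h.natDegree + 1)).filter (fun b => v (h.coeff b) = B) with hT
  have hTne : T.Nonempty := by
    obtain ⟨b, hb, hEq⟩ := Finset.exists_mem_eq_sup' hne2 (fun b => v (h.coeff b))
    exact ⟨b, Finset.mem_filter.mpr ⟨hb, hEq.symm⟩⟩
  set i := S.max' hSne with hi
  set j := T.max' hTne with hj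
  have hiS := S.max'_mem hSne
  have hjT := T.max'_mem hTne
  have hiA : v (g.coeff i) = A := (Finset.mem_filter.mp hiS).2
  have hjB : v (h.coeff j) = B := (Finset.mem_filter.mp hjT).2
  have him : i ≤ g.natDegree := by
    have := Finset.mem_range.mp (Finset.mem_filter.mp hiS).1; omega
  have hjl : j ≤ h.natDegree := by
    have := Finset.mem_range.mp (Finset.mem_filter.mp hjT).1; omega
  have hgi : ∀ a, i < a → v (g.coeff a) < A := by
    intro a hia
    by_cases ha : a ≤ g.natDegree
    · refine lt_of_le_of_ne (hgA a) (fun hEq => ?_)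
      exact absurd (S.le_max' a (Finset.mem_filter.mpr
        ⟨Finset.mem_range.mpr (by omega), hEq⟩)) (not_le.mpr hia)
    · rw [coeff_eq_zero_of_natDegree_lt (by omega), v.map_zero]
      exact zero_lt_iff.mpr hA0
  have hhj : ∀ b, j < b → v (h.coeff b) < B := by
    intro b hjb
    by_cases hb : b ≤ h.natDegree
    · refine lt_of_le_of_ne (hhB b) (fun hEq => ?_)
      exact absurd (T.le_max' b (Finset.mem_filter.mpr
        ⟨Finset.mem_range.mpr (by omega), hEq⟩)) (not_le.mpr hjb)
    · rw [coeff_eq_zero_of_natDegree_lt (by omega), v.map_zero]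
      exact zero_lt_iff.mpr hB0
  have key : v ((g * h).coeff (i + j)) = A * B := by
    have hsum := v.map_sum_eq_of_lt (s := Finset.HasAntidiagonal.antidiagonal (i + j))
      (f := fun p : ℕ × ℕ => g.coeff p.1 * h.coeff p.2) (j := ((i, j) : ℕ × ℕ))
      (Finset.HasAntidiagonal.mem_antidiagonal.mpr rfl) ?_
    · rw [coeff_mul, hsum, v.map_mul, hiA, hjB]
    · rintro ⟨a, b⟩ hab
      simp only [Finset.mem_sdiff, Finset.HasAntidiagonal.mem_antidiagonal, Finset.mem_singleton] at hab
      obtain ⟨hab1, hab2⟩ := hab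
      have hne : (a, b) ≠ (i, j) := hab2
      show v (g.coeff a * h.coeff b) < v (g.coeff i * h.coeff j)
      rw [v.map_mul, v.map_mul, hiA, hjB]
      rcases lt_trichotomy a i with hlt | heq | hgt
      · have hbj : j < b := by omega
        exact mul_lt_mul_of_le_of_lt_of_nonneg_of_pos (hgA a) (hhj b hbj) zero_le' (zero_lt_iff.mpr hA0)
      · exact absurd (Prod.ext heq (by omega)) hne
      · have h1 := hgi a hgt
        have h2 : v (h.coeff b) * v (g.coeff a) < B * A :=
          mul_lt_mul_of_le_of_lt_of_nonneg_of_pos (hhB b) h1 zero_le' (zero_lt_iff.mpr hB0)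
        rwa [mul_comm (v (h.coeff b)), mul_comm B] at h2
  have hdeg : (g * h).natDegree = g.natDegree + h.natDegree := hg.natDegree_mul hh
  calc v (g.coeff k) ≤ A := hgA k
    _ = A * 1 := (mul_one A).symm
    _ ≤ A * B := mul_le_mul_right hB1 A
    _ = v ((g * h).coeff (i + j)) := key.symm
    _ ≤ _ := Finset.le_sup' (fun j => v ((g * h).coeff j))
        (Finset.mem_range.mpr (by omega))

end Aux

/-- Gauss's lemma for monic factorizations over the ring of integers of a number field:
if `δ ∈ O_F` is nonzero, `f` is a monic polynomial with coefficients in `(1/δ)·O_F`,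
and `f = g·h` with `g, h` monic in `F[x]`, then `g` and `h` also have coefficients in
`(1/δ)·O_F`. -/
theorem gauss_lemma_monic {F : Type*} [Field F] [NumberField F]
    (δ : NumberField.RingOfIntegers F) (hδ : δ ≠ 0)
    (f g h : Polynomial F) (hf : f.Monic) (hg : g.Monic) (hh : h.Monic)
    (hfactor : f = g * h)
    (hcoeff : ∀ k, (δ : F) * f.coeff k ∈ (algebraMap (NumberField.RingOfIntegers F) F).range) :
    (∀ k, (δ : F) * g.coeff k ∈ (algebraMap (NumberField.RingOfIntegers F) F).range) ∧
    (∀ k, (δ : F) * h.coeff k ∈ (algebraMap (NumberField.RingOfIntegers F) F).range) := by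
  subst hfactor
  have hsup : ∀ (v : HeightOneSpectrum (NumberField.RingOfIntegers F)) (jj : ℕ),
      v.valuation F ((δ : F) * (g * h).coeff jj) ≤ 1 := by
    intro v jj
    obtain ⟨r, hr⟩ := hcoeff jj
    rw [← hr]
    exact v.valuation_le_one r
  have hmain : ∀ (g' h' : Polynomial F), g'.Monic → h'.Monic → g' * h' = g * h →
      ∀ k, (δ : F) * g'.coeff k ∈ (algebraMap (NumberField.RingOfIntegers F) F).range := by
    intro g' h' hg' hh' hgh k
    apply aux_mem_range_of_forall_valuation_le_one
    intro v
    rw [Valuation.map_mul]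
    have hb := aux_val_coeff_le (v.valuation F) hg' hh' k
    rw [hgh] at hb
    obtain ⟨j0, hj0mem, hj0⟩ := Finset.exists_mem_eq_sup'
      (⟨0, Finset.mem_range.mpr (Nat.succ_pos _)⟩ :
        (Finset.range ((g * h).natDegree + 1)).Nonempty)
      (fun j => v.valuation F ((g * h).coeff j))
    calc v.valuation F (δ : F) * v.valuation F (g'.coeff k)
        ≤ v.valuation F (δ : F) * ((Finset.range ((g * h).natDegree + 1)).sup'
            ⟨0, Finset.mem_range.mpr (Nat.succ_pos _)⟩
            fun j => v.valuation F ((g * h).coeff j)) := mul_le_mul_right hb _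
      _ = v.valuation F (δ : F) * v.valuation F ((g * h).coeff j0) := by rw [hj0]
      _ = v.valuation F ((δ : F) * (g * h).coeff j0) := (Valuation.map_mul _ _ _).symm
      _ ≤ 1 := hsup v j0
  exact ⟨hmain g h hg hh rfl, hmain h g hh hg (mul_comm h g)⟩
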